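/- Let Q be the quaternion group of order 8 with center Z = {±1}, and let π be a finite-dimensional complex orthogonal representation of Q^n. Let θ be a nontrivial linear character of the subgroup Z^n ≤ Q^n. Then the multiplicity [θ, π|_{Z^n}] of θ in the restriction of π to Z^n is divisible by 4. -/

import Mathlib

open CategoryTheory

/-- A finite-dimensional complex representation is orthogonal if it carries a nondegenerate
invariant symmetric bilinear form. -/
def FDRep.IsOrthogonal {G : Type} [Group G] (X : FDRep ℂ G) : Prop :=
  ∃ B : X.V →ₗ[ℂ] X.V →ₗ[ℂ] ℂ,
    (∀ v w, B v w = B w v) ∧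
    (∀ v, (∀ w, B v w = 0) → v = 0) ∧
    (∀ (g : G) (v w), B (X.ρ g v) (X.ρ g w) = B v w)

open Module LinearMap.BilinForm

theorem aux_alt_even : ∀ (m : ℕ) (V : Type) [AddCommGroup V] [Module ℂ V]
    [FiniteDimensional ℂ V] (B : LinearMap.BilinForm ℂ V),
    B.IsAlt → B.Nondegenerate → Module.finrank ℂ V = m → Even m := by
  intro m
  induction m using Nat.strong_induction_on with
  | _ m ih =>
  intro V _ _ _ B halt hnd hrk
  rcases Nat.eq_zero_or_pos m with h0 | hpos
  · simp [h0]
  have hrefl : B.IsRefl := halt.isRefl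
  have hVpos : 0 < Module.finrank ℂ V := hrk ▸ hpos
  have : Nontrivial V := Module.nontrivial_of_finrank_pos hVpos
  obtain ⟨v, hv⟩ := exists_ne (0 : V)
  obtain ⟨w, hw⟩ : ∃ w, B v w ≠ 0 := by
    by_contra h; push_neg at h; exact hv (hnd.1 v h)
  -- v, w are linearly independent
  have hli : LinearIndependent ℂ ![v, w] := by
    rw [LinearIndependent.pair_iff]
    intro s t hst
    have h1 : B v (s • v + t • w) = 0 := by rw [hst]; simp
    have h2 : B w (s • v + t • w) = 0 := by rw [hst]; simp
    simp only [map_add, map_smul, smul_eq_mul, halt v, halt w, mul_zero, add_zero, zero_add] at h1 h2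
    have hwv : B w v = - B v w := (halt.neg_eq v w).symm ▸ rfl
    rw [hwv] at h2
    have ht : t = 0 := by
      rcases mul_eq_zero.mp h1 with h | h
      · exact h
      · exact absurd h hw
    have hs : s = 0 := by
      rcases mul_eq_zero.mp h2 with h | h
      · exact h
      · simp at h; exact absurd h hw
    exact ⟨hs, ht⟩
  set W : Submodule ℂ V := Submodule.span ℂ (Set.range ![v, w]) with hW
  have hvW : v ∈ W := Submodule.subset_span ⟨0, rfl⟩
  have hwW : w ∈ W := Submodule.subset_span ⟨1, rfl⟩
  have hWrank : finrank ℂ W = 2 := by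
    rw [hW, finrank_span_eq_card hli]; simp
  -- disjointness of W and its orthogonal complement
  have hdisj : Disjoint W (B.orthogonal W) := by
    rw [Submodule.disjoint_def]
    intro u huW huO
    have hmv := huO v hvW
    have hmw := huO w hwW
    obtain ⟨a, b, rfl⟩ : ∃ a b : ℂ, a • v + b • w = u := by
      have huW' : u ∈ Submodule.span ℂ (Set.range ![v, w]) := huW
      have : u ∈ Submodule.span ℂ {v, w} := by
        rwa [show (Set.range ![v, w]) = {v, w} by
          simp [Matrix.range_cons, Matrix.range_empty, Set.pair_comm]] at huW' 
      exact Submodule.mem_span_pair.mp this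
    simp only [map_add, map_smul, smul_eq_mul, halt v, halt w, mul_zero, add_zero, zero_add] at hmv hmw
    have hwv : B w v = - B v w := (halt.neg_eq v w).symm ▸ rfl
    rw [hwv] at hmw
    have hb : b = 0 := by
      rcases mul_eq_zero.mp hmv with h | h
      · exact h
      · exact absurd h hw
    have ha : a = 0 := by
      rcases mul_eq_zero.mp hmw with h | h
      · exact h
      · simp at h; exact absurd h hw
    simp [ha, hb]
  have hd2 : Disjoint (B.orthogonal W) (B.orthogonal (B.orthogonal W)) := by
    rw [orthogonal_orthogonal hnd hrefl W]
    exact hdisj.symm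
  have hndO : (B.restrict (B.orthogonal W)).Nondegenerate :=
    nondegenerate_restrict_of_disjoint_orthogonal B hrefl hd2
  have haltO : (B.restrict (B.orthogonal W)).IsAlt := fun x => halt x
  have hrkO : finrank ℂ (B.orthogonal W) = m - 2 := by
    rw [finrank_orthogonal hnd W, hWrank, hrk]
  have h2m : 2 ≤ m := by
    have := Submodule.finrank_le W
    omega
  have hlt : m - 2 < m := by omega
  have heven := ih (m - 2) hlt (B.orthogonal W) (B.restrict (B.orthogonal W)) haltO hndO hrkO
  obtain ⟨k, hk⟩ := heven
  exact ⟨k + 1, by omega⟩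

theorem lemA (V : Type) [AddCommGroup V] [Module ℂ V] [FiniteDimensional ℂ V]
    (B : V →ₗ[ℂ] V →ₗ[ℂ] ℂ) (I J : V →ₗ[ℂ] V)
    (hsymm : ∀ v w, B v w = B w v)
    (hnd : ∀ v, (∀ w, B v w = 0) → v = 0)
    (hI2 : ∀ v, I (I v) = -v) (hJ2 : ∀ v, J (J v) = -v)
    (hanti : ∀ v, J (I v) = -(I (J v)))
    (hBI : ∀ v w, B (I v) (I w) = B v w)
    (hBJ : ∀ v w, B (J v) (J w) = B v w) :
    4 ∣ Module.finrank ℂ V := by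
  have hanti' : ∀ v, I (J v) = -(J (I v)) := by
    intro v; rw [hanti, neg_neg]
  set X : Submodule ℂ V := Module.End.eigenspace I Complex.I with hXdef
  set Y : Submodule ℂ V := Module.End.eigenspace I (-Complex.I) with hYdef
  have hmemX : ∀ v : V, v ∈ X ↔ I v = Complex.I • v := fun v => Module.End.mem_eigenspace_iff
  have hmemY : ∀ v : V, v ∈ Y ↔ I v = (-Complex.I) • v := fun v => Module.End.mem_eigenspace_iff
  -- sup is everything
  have hsup : X ⊔ Y = ⊤ := by
    rw [eq_top_iff]
    intro v _
    have hdecomp : v = ((1/2 : ℂ) • v - ((Complex.I/2) • I v))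
        + ((1/2 : ℂ) • v + ((Complex.I/2) • I v)) := by module
    have hx : ((1/2 : ℂ) • v - ((Complex.I/2) • I v)) ∈ X := by
      rw [hmemX]
      have e1 : I ((1/2 : ℂ) • v - (Complex.I/2) • I v)
          = (1/2 : ℂ) • I v + (Complex.I/2) • v := by
        rw [map_sub, map_smul, map_smul, hI2]; module
      have e2 : Complex.I • ((1/2 : ℂ) • v - (Complex.I/2) • I v)
          = (Complex.I/2) • v - ((Complex.I * Complex.I)/2) • I v := by module
      rw [e1, e2, Complex.I_mul_I]; module
    have hy : ((1/2 : ℂ) • v + ((Complex.I/2) • I v)) ∈ Y := by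
      rw [hmemY]
      have e1 : I ((1/2 : ℂ) • v + (Complex.I/2) • I v)
          = (1/2 : ℂ) • I v - (Complex.I/2) • v := by
        rw [map_add, map_smul, map_smul, hI2]; module
      have e2 : (-Complex.I) • ((1/2 : ℂ) • v + (Complex.I/2) • I v)
          = -((Complex.I/2) • v) - (((Complex.I * Complex.I))/2) • I v := by module
      rw [e1, e2, Complex.I_mul_I]; module
    rw [hdecomp]
    exact Submodule.add_mem_sup hx hy
  have hinf : X ⊓ Y = ⊥ := by
    rw [eq_bot_iff]
    intro v hv
    rw [Submodule.mem_inf] at hv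
    obtain ⟨hvX, hvY⟩ := hv
    rw [hmemX] at hvX
    rw [hmemY] at hvY
    have h0 : (2 * Complex.I) • v = 0 := by
      have : Complex.I • v - (-Complex.I) • v = (2 * Complex.I) • v := by module
      rw [← this, ← hvX, ← hvY, sub_self]
    have h2I : (2 * Complex.I) ≠ 0 := by simp [Complex.I_ne_zero]
    rw [Submodule.mem_bot]
    exact (smul_eq_zero.mp h0).resolve_left h2I
  -- J maps X into Y and Y into X
  have hJXY : ∀ v ∈ X, J v ∈ Y := by
    intro v hv
    rw [hmemX] at hv
    rw [hmemY, hanti', hv, map_smul]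
    module
  have hJYX : ∀ v ∈ Y, J v ∈ X := by
    intro v hv
    rw [hmemY] at hv
    rw [hmemX, hanti', hv, map_smul]
    module
  -- finrank V = finrank X + finrank Y
  have hcompl : IsCompl X Y := ⟨disjoint_iff.mpr hinf, codisjoint_iff.mpr hsup⟩
  have hdim : finrank ℂ V = finrank ℂ X + finrank ℂ Y := by
    rw [← LinearEquiv.finrank_eq (Submodule.prodEquivOfIsCompl X Y hcompl),
      Module.finrank_prod]
  -- X ≃ Y via J
  have hJinj : ∀ v : V, J v = 0 → v = 0 := by
    intro v hv
    have h := hJ2 v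
    rw [hv, map_zero] at h
    simpa using h.symm
  have hXY : finrank ℂ X = finrank ℂ Y := by
    have hbij : Function.Bijective (J.restrict hJXY) := by
      constructor
      · intro a b hab
        have h1 : (J (a : V) : V) = J (b : V) := by
          have := congrArg Subtype.val hab
          simpa [LinearMap.restrict_apply] using this
        have h2 : J ((a : V) - (b : V)) = 0 := by rw [map_sub, h1, sub_self]
        have h3 := hJinj _ h2
        exact Subtype.ext (by rwa [sub_eq_zero] at h3)
      · rintro ⟨y, hy⟩
        refine ⟨⟨-J y, Submodule.neg_mem _ (hJYX y hy)⟩, ?_⟩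
        apply Subtype.ext
        simp [LinearMap.restrict_apply, hJ2]
    exact LinearEquiv.finrank_eq (LinearEquiv.ofBijective _ hbij)
  -- the alternating form on X
  set C : LinearMap.BilinForm ℂ X :=
    LinearMap.compl₁₂ B X.subtype (J ∘ₗ X.subtype) with hCdef
  have hCapp : ∀ a b : X, C a b = B (a : V) (J (b : V)) := by
    intro a b; rfl
  have hCalt : C.IsAlt := by
    intro a
    have h1 : B (J (a:V)) (J (J (a:V))) = B (a:V) (J (a:V)) := hBJ _ _
    rw [hJ2, map_neg] at h1
    rw [hsymm (J (a:V)) (a:V)] at h1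
    rw [hCapp]
    linear_combination (-1/2 : ℂ) * h1
  have hCnd : C.Nondegenerate := by
    refine (LinearMap.IsRefl.nondegenerate_iff_separatingLeft (fun x y h => hCalt.isRefl x y h)).mpr ?_
    intro a ha
    have haV : ∀ u : V, B (a : V) u = 0 := by
      intro u
      have hu : u ∈ X ⊔ Y := hsup ▸ Submodule.mem_top
      obtain ⟨p, hp, q, hq, rfl⟩ := Submodule.mem_sup.mp hu
      have hBp : B (a : V) p = 0 := by
        have h := hBI (a : V) p
        rw [(hmemX _).mp a.2, (hmemX _).mp hp] at h
        simp only [map_smul, LinearMap.smul_apply, smul_eq_mul] at h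
        rw [← mul_assoc, Complex.I_mul_I] at h
        linear_combination (-1/2 : ℂ) * h
      have hBq : B (a : V) q = 0 := by
        have hq' : -J q ∈ X := Submodule.neg_mem _ (hJYX q hq)
        have h := ha ⟨-J q, hq'⟩
        rw [hCapp] at h
        simpa [hJ2] using h
      rw [map_add, hBp, hBq, add_zero]
    exact Subtype.ext (hnd _ haV)
  have hXeven : Even (finrank ℂ X) :=
    aux_alt_even (finrank ℂ X) X C hCalt hCnd rfl
  obtain ⟨k, hk⟩ := hXeven
  rw [hdim, ← hXY, hk]
  omega

/-- Let `Q` be the quaternion group of order 8 with center `Z = {±1}`, `π` an orthogonal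
complex representation of `Qⁿ`, and `θ` a nontrivial linear character of `Zⁿ`. Then the
multiplicity of `θ` in the restriction of `π` to `Zⁿ` (the dimension of the joint
`θ`-eigenspace) is divisible by `4`. -/
theorem stmt_5 (n : ℕ)
    (π : FDRep ℂ (Fin n → QuaternionGroup 2)) (hπ : π.IsOrthogonal)
    (θ : (Fin n → ↥(Subgroup.center (QuaternionGroup 2))) →* ℂ) (hθ : θ ≠ 1) :
    4 ∣ Module.finrank ℂ
        ↥(⨅ z : Fin n → ↥(Subgroup.center (QuaternionGroup 2)),
          Module.End.eigenspace (π.ρ fun i => (z i : QuaternionGroup 2)) (θ z)) := by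
  classical
  obtain ⟨B, hsymm, hnd, hinv⟩ := hπ
  have hsq : ∀ g : QuaternionGroup 2, g ∈ Subgroup.center (QuaternionGroup 2) → g * g = 1 := by
    decide
  have hcent : ∀ g : QuaternionGroup 2, g ∈ Subgroup.center (QuaternionGroup 2) → g ≠ 1 →
      g = QuaternionGroup.a 2 := by decide
  set ι : (Fin n → ↥(Subgroup.center (QuaternionGroup 2))) → (Fin n → QuaternionGroup 2) :=
    fun z i => (z i : QuaternionGroup 2) with hι
  have hmul : ∀ z₁ z₂, ι (z₁ * z₂) = ι z₁ * ι z₂ := fun _ _ => rfl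
  have hcomm : ∀ (z) (g : Fin n → QuaternionGroup 2), g * ι z = ι z * g := by
    intro z g; funext i
    exact Subgroup.mem_center_iff.mp (z i).2 (g i)
  have hρmul : ∀ (g h : Fin n → QuaternionGroup 2) v, π.ρ g (π.ρ h v) = π.ρ (g * h) v := by
    intro g h v; rw [map_mul]; rfl
  set Vθ := (⨅ z : Fin n → ↥(Subgroup.center (QuaternionGroup 2)),
      Module.End.eigenspace (π.ρ fun i => (z i : QuaternionGroup 2)) (θ z)) with hVθ
  have hmem : ∀ v : π.V, v ∈ Vθ ↔ ∀ z, π.ρ (ι z) v = θ z • v := by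
    intro v
    rw [hVθ]
    simp only [Submodule.mem_iInf]
    exact forall_congr' fun z => Module.End.mem_eigenspace_iff
  have hzsq : ∀ z : (Fin n → ↥(Subgroup.center (QuaternionGroup 2))), z * z = 1 := by
    intro z; funext i
    exact Subtype.ext (hsq _ (z i).2)
  have hθsq : ∀ z, θ z * θ z = 1 := by intro z; rw [← map_mul, hzsq, map_one]
  have hθpm : ∀ z, θ z = 1 ∨ θ z = -1 := fun z => mul_self_eq_one_iff.mp (hθsq z)
  have hθinv : ∀ z, θ z⁻¹ = θ z := by
    intro z
    have h2 : θ z⁻¹ * θ z = 1 := by rw [← map_mul, inv_mul_cancel, map_one]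
    calc θ z⁻¹ = θ z⁻¹ * (θ z * θ z) := by rw [hθsq, mul_one]
    _ = (θ z⁻¹ * θ z) * θ z := by rw [mul_assoc]
    _ = θ z := by rw [h2, one_mul]
  obtain ⟨z₀, hz₀⟩ : ∃ z, θ z ≠ 1 := by
    by_contra h; push_neg at h
    exact hθ (DFunLike.ext _ _ fun z => (h z).trans rfl)
  obtain ⟨i0, hi0⟩ : ∃ i, θ (Pi.mulSingle i (z₀ i)) = -1 := by
    by_contra h
    push_neg at h
    have hall : ∀ i, θ (Pi.mulSingle i (z₀ i)) = 1 := fun i => (hθpm _).resolve_right (h i)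
    refine hz₀ ?_
    open scoped IsMulCommutative in rw [← Finset.univ_prod_mulSingle z₀, map_prod]
    exact Finset.prod_eq_one fun i _ => hall i
  set ζ : ↥(Subgroup.center (QuaternionGroup 2)) := z₀ i0 with hζ
  set c : Fin n → ↥(Subgroup.center (QuaternionGroup 2)) := Pi.mulSingle i0 ζ with hc
  have hθc : θ c = -1 := hi0
  have hζ1 : ζ ≠ 1 := by
    intro h
    rw [hc, h, Pi.mulSingle_one, map_one] at hθc
    norm_num at hθc
  have hζa : (ζ : QuaternionGroup 2) = QuaternionGroup.a 2 :=
    hcent ζ ζ.2 (fun h => hζ1 (Subtype.ext h))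
  have hιsingle : ι c = Pi.mulSingle i0 (QuaternionGroup.a 2) := by
    funext i
    rw [hι, hc]
    by_cases hii : i = i0
    · subst hii; simp [hζa]
    · simp [Pi.mulSingle_apply, hii]
  set x : Fin n → QuaternionGroup 2 := Pi.mulSingle i0 (QuaternionGroup.a 1) with hx
  set y : Fin n → QuaternionGroup 2 := Pi.mulSingle i0 (QuaternionGroup.xa 0) with hy
  have hxx : x * x = ι c := by
    rw [hιsingle, hx, ← Pi.mulSingle_mul]
    congr 1
  have hyy : y * y = ι c := by
    rw [hιsingle, hy, ← Pi.mulSingle_mul]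
    congr 1
  have hyx : y * x = ι c * (x * y) := by
    rw [hιsingle, hx, hy, ← Pi.mulSingle_mul, ← Pi.mulSingle_mul, ← Pi.mulSingle_mul]
    congr 1
  have hpres : ∀ (g : Fin n → QuaternionGroup 2) (v : π.V), v ∈ Vθ → π.ρ g v ∈ Vθ := by
    intro g v hv
    rw [hmem] at hv ⊢
    intro z
    rw [hρmul, ← hcomm z g, ← hρmul, hv z, map_smul]
  have hact : ∀ v ∈ Vθ, π.ρ (ι c) v = -v := by
    intro v hv
    rw [(hmem v).mp hv c, hθc, neg_one_smul]
  -- restricted structures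
  set Ix : ↥Vθ →ₗ[ℂ] ↥Vθ := (π.ρ x).restrict (fun v hv => hpres x v hv) with hIx
  set Jy : ↥Vθ →ₗ[ℂ] ↥Vθ := (π.ρ y).restrict (fun v hv => hpres y v hv) with hJy
  set C : ↥Vθ →ₗ[ℂ] ↥Vθ →ₗ[ℂ] ℂ := LinearMap.compl₁₂ B Vθ.subtype Vθ.subtype with hC
  have hCapp : ∀ a b : ↥Vθ, C a b = B a.1 b.1 := fun a b => rfl
  have hIapp : ∀ v : ↥Vθ, (Ix v).1 = π.ρ x v.1 := fun v => rfl
  have hJapp : ∀ v : ↥Vθ, (Jy v).1 = π.ρ y v.1 := fun v => rfl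
  haveI : Fintype (Fin n → ↥(Subgroup.center (QuaternionGroup 2))) := Fintype.ofFinite _
  apply lemA (↥Vθ) C Ix Jy
  · intro v w; rw [hCapp, hCapp]; exact hsymm _ _
  · -- nondegeneracy via averaging
    intro v hv
    refine Subtype.ext (hnd _ fun u => ?_)
    set κ : ℂ := (Fintype.card (Fin n → ↥(Subgroup.center (QuaternionGroup 2))) : ℂ) with hκ
    have hκ0 : κ ≠ 0 := by
      rw [hκ]
      exact_mod_cast Fintype.card_ne_zero
    set w : π.V := κ⁻¹ • ∑ z, θ z • π.ρ (ι z) u with hw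
    have hwmem : w ∈ Vθ := by
      rw [hmem]
      intro z'
      rw [hw, map_smul, map_sum]
      have hterm : ∀ z, π.ρ (ι z') (θ z • π.ρ (ι z) u) = θ z • π.ρ (ι (z' * z)) u := by
        intro z
        rw [map_smul, hρmul, ← hmul]
      simp only [hterm]
      have hre : ∑ z, θ z • π.ρ (ι (z' * z)) u = ∑ z, (θ z' * θ z) • π.ρ (ι z) u := by
        refine Fintype.sum_equiv (Equiv.mulLeft z') _ _ fun z => ?_
        simp only [Equiv.coe_mulLeft]
        rw [← hθinv z', ← map_mul, inv_mul_cancel_left]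
      rw [hre, smul_comm (θ z') κ⁻¹]
      congr 1
      rw [Finset.smul_sum]
      refine Finset.sum_congr rfl fun z _ => ?_
      rw [mul_smul]
    have hterm2 : ∀ z, B v.1 (π.ρ (ι z) u) = θ z * B v.1 u := by
      intro z
      have h := hinv (ι z)⁻¹ v.1 (π.ρ (ι z) u)
      rw [hρmul, inv_mul_cancel, map_one, Module.End.one_apply] at h
      have hvz : π.ρ ((ι z)⁻¹) v.1 = θ z • v.1 := by
        have h2 : (ι z)⁻¹ = ι z⁻¹ := rfl
        rw [h2, (hmem _).mp v.2 z⁻¹, hθinv]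
      rw [hvz] at h
      rw [← h, map_smul, LinearMap.smul_apply, smul_eq_mul]
    have hBw : B v.1 w = B v.1 u := by
      rw [hw, map_smul, map_sum]
      simp only [map_smul, smul_eq_mul, hterm2]
      have hcollapse : ∀ z : (Fin n → ↥(Subgroup.center (QuaternionGroup 2))),
          θ z * (θ z * B v.1 u) = B v.1 u := by
        intro z; rw [← mul_assoc, hθsq, one_mul]
      simp only [hcollapse]
      rw [Finset.sum_const, Finset.card_univ, nsmul_eq_mul, ← hκ]
      rw [← mul_assoc, inv_mul_cancel₀ hκ0, one_mul]
    have h0 := hv ⟨w, hwmem⟩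
    rw [hCapp] at h0
    rw [← hBw]
    exact h0
  · intro v
    apply Subtype.ext
    rw [show (-v : ↥Vθ).1 = -v.1 from rfl]
    rw [hIapp, hIapp, hρmul, hxx]
    exact hact _ v.2
  · intro v
    apply Subtype.ext
    rw [show (-v : ↥Vθ).1 = -v.1 from rfl]
    rw [hJapp, hJapp, hρmul, hyy]
    exact hact _ v.2
  · intro v
    apply Subtype.ext
    rw [show (-(Ix (Jy v)) : ↥Vθ).1 = -(Ix (Jy v)).1 from rfl]
    rw [hJapp, hIapp, hIapp, hJapp]
    rw [hρmul, hyx, ← hρmul]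
    rw [hact _ (hpres (x * y) _ v.2)]
    rw [← hρmul]
  · intro v w
    rw [hCapp, hCapp, hIapp, hIapp]
    exact hinv x _ _
  · intro v w
    rw [hCapp, hCapp, hJapp, hJapp]
    exact hinv y _ _
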